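/- Let S be a numerical semigroup with level function λ. For all nonzero a, x, y ∈ S, if λ(a+x) = λ(a+y), then |λ(y) − λ(x)| ≤ 1. -/
import Mathlib

theorem stmt6 (S : Set ℕ)
    (h0 : 0 ∈ S)
    (hadd : ∀ a ∈ S, ∀ b ∈ S, a + b ∈ S)
    (hfin : (Sᶜ : Set ℕ).Finite)
    (m : ℕ) (hm : m ∈ S ∧ m ≠ 0 ∧ ∀ x ∈ S, x ≠ 0 → m ≤ x)
    (c : ℕ) (hc : (∀ x, c ≤ x → x ∈ S) ∧ ∀ c', (∀ x, c' ≤ x → x ∈ S) → c ≤ c')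
    (q ρ : ℕ) (hq : q = (c + m - 1) / m) (hρ : ρ = q * m - c)
    (lvl : ℕ → ℕ) (hlvl : ∀ x, lvl x = (x + ρ) / m) :
    ∀ a ∈ S, ∀ x ∈ S, ∀ y ∈ S, a ≠ 0 → x ≠ 0 → y ≠ 0 →
      lvl (a + x) = lvl (a + y) → |(lvl y : ℤ) - (lvl x : ℤ)| ≤ 1 := by
  intro a _ x _ y _ _ _ _ heq
  rw [hlvl, hlvl] at heq
  rw [hlvl x, hlvl y]
  have hm0 : 0 < m := Nat.pos_of_ne_zero hm.2.1
  -- from heq: |x - y| < m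
  have key : ∀ u v : ℕ, (u + ρ) / m = (v + ρ) / m → u < v + m := by
    intro u v h
    have h1 := Nat.div_add_mod (u + ρ) m
    have h1' := Nat.mod_lt (u + ρ) hm0
    have h2 := Nat.div_add_mod (v + ρ) m
    rw [h] at h1
    omega
  have hx : a + x < a + y + m := key _ _ heq
  have hy : a + y < a + x + m := key _ _ heq.symm
  -- conclude: divs differ by at most 1
  have step : ∀ u v : ℕ, u < v + m → (u + ρ) / m ≤ (v + ρ) / m + 1 := by
    intro u v h
    calc (u + ρ) / m ≤ (v + ρ + m) / m := Nat.div_le_div_right (by omega)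
      _ = (v + ρ) / m + 1 := Nat.add_div_right _ hm0
  have s1 := step x y (by omega)
  have s2 := step y x (by omega)
  rw [abs_le]
  omega
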